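/- Let $(X,\mu)$ be a finite measure space, $s : X \to \mathbb{R}$ bounded measurable with average $S = \frac{1}{\mu(X)}\int_X s\, d\mu$, and for each $k$ let $s_0^{(k)}, \dots, s_{N_k}^{(k)}$ be unit vectors in $L^2(\mu)$ with $B_k := \sum_i |s_i^{(k)}|^2$ satisfying $B_k = 1 + \frac{s}{4\pi} k^{-1} + O(k^{-2})$ uniformly. Define $m_i^{(k)} = -\frac{k^{-1}}{4\pi}\int_X |s_i^{(k)}|^2 (s - S)\, d\mu$. Then $\left(\sum_{i=0}^{N_k} (m_i^{(k)})^2\right)^{1/2} \le \frac{k^{-1}}{4\pi}\, \|s - S\|_{L^2(\mu)} + O(k^{-2} \mu(X)^{1/2})$. -/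

import Mathlib

open MeasureTheory Filter

/-- Cauchy–Schwarz with respect to the weight `f`: if `∫ f = 1`, `f ≥ 0`, then
`(∫ f g)² ≤ ∫ f g²`. -/
lemma weighted_cs {X : Type*} [MeasurableSpace X] (μ : Measure X) (f g : X → ℝ)
    (hf0 : ∀ x, 0 ≤ f x) (hf1 : ∫ x, f x ∂μ = 1)
    (hfi : Integrable f μ) (hfg : Integrable (fun x => f x * g x) μ)
    (hfg2 : Integrable (fun x => f x * g x ^ 2) μ) :
    (∫ x, f x * g x ∂μ) ^ 2 ≤ ∫ x, f x * g x ^ 2 ∂μ := by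
  set B := ∫ x, f x * g x ∂μ with hB
  have h0 : 0 ≤ ∫ x, f x * (g x - B) ^ 2 ∂μ :=
    integral_nonneg fun x => mul_nonneg (hf0 x) (sq_nonneg _)
  have hexp : (fun x => f x * (g x - B) ^ 2) =
      fun x => (f x * g x ^ 2 - (2 * B) * (f x * g x)) + B ^ 2 * f x := by
    funext x; ring
  have hsub : Integrable (fun x => f x * g x ^ 2 - (2 * B) * (f x * g x)) μ :=
    hfg2.sub (hfg.const_mul (2 * B))
  rw [hexp, integral_add hsub (hfi.const_mul (B ^ 2)),
    integral_sub hfg2 (hfg.const_mul (2 * B)), integral_const_mul, integral_const_mul,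
    hf1, ← hB] at h0
  nlinarith [h0]

/-- Measure-theoretic core of Lemma 3.1: the diagonal entries
`m i = -(k⁻¹/4π) ∫ |s_i|² (s - S)` of the trace-free matrix satisfy
`(∑ m i ²)^{1/2} ≤ (k⁻¹/4π) ‖s - S‖_{L²} + O(k⁻² μ(X)^{1/2})`. -/
theorem stmt4 {X : Type*} [MeasurableSpace X] (μ : Measure X) [IsFiniteMeasure μ]
    (s : X → ℝ) (hsm : Measurable s) (hsb : ∃ C, ∀ x, |s x| ≤ C)
    (S : ℝ) (hS : S = (∫ x, s x ∂μ) / (μ Set.univ).toReal)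
    (N : ℕ → ℕ) (v : (k : ℕ) → Fin (N k + 1) → X → ℂ)
    (hvm : ∀ k i, Measurable (v k i))
    (hvL2 : ∀ k i, ∫ x, ‖v k i x‖ ^ 2 ∂μ = 1)
    (hB : ∃ C : ℝ, ∀ᶠ k : ℕ in atTop, ∀ x,
      |(∑ i, ‖v k i x‖ ^ 2) - 1 - s x / (4 * Real.pi * k)| ≤ C / (k : ℝ) ^ 2)
    (m : (k : ℕ) → Fin (N k + 1) → ℝ)
    (hm : ∀ k i, m k i = -(1 / (4 * Real.pi * k)) * ∫ x, ‖v k i x‖ ^ 2 * (s x - S) ∂μ) :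
    ∃ C : ℝ, ∀ᶠ k : ℕ in atTop,
      Real.sqrt (∑ i, (m k i) ^ 2) ≤
        (1 / (4 * Real.pi * k)) * Real.sqrt (∫ x, (s x - S) ^ 2 ∂μ)
          + C / (k : ℝ) ^ 2 * Real.sqrt (μ Set.univ).toReal := by
  obtain ⟨Cs, hCs⟩ := hsb
  obtain ⟨C₀, hC₀⟩ := hB
  set Cs' : ℝ := max Cs 0 with hCs'def
  have hCs'0 : 0 ≤ Cs' := le_max_right _ _
  have hCs' : ∀ x, |s x| ≤ Cs' := fun x => (hCs x).trans (le_max_left _ _)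
  set g : X → ℝ := fun x => s x - S with hgdef
  set M : ℝ := Cs' + |S| with hMdef
  have hM0 : 0 ≤ M := add_nonneg hCs'0 (abs_nonneg _)
  have hgb : ∀ x, |g x| ≤ M := fun x =>
    (abs_sub _ _).trans (add_le_add (hCs' x) le_rfl)
  have hgm : Measurable g := hsm.sub measurable_const
  have hg2b : ∀ x, |g x ^ 2| ≤ M ^ 2 := by
    intro x
    rw [abs_pow]
    exact pow_le_pow_left₀ (abs_nonneg _) (hgb x) 2
  have hg2i : Integrable (fun x => g x ^ 2) μ :=
    ⟨(hgm.pow_const 2).aestronglyMeasurable,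
      HasFiniteIntegral.of_bounded (C := M ^ 2) (ae_of_all _ fun x => by
        simpa [Real.norm_eq_abs] using hg2b x)⟩
  have hg2nn : 0 ≤ ∫ x, g x ^ 2 ∂μ := integral_nonneg fun x => sq_nonneg _
  have hIg2 : ∫ x, g x ^ 2 ∂μ ≤ M ^ 2 * (μ Set.univ).toReal := by
    calc ∫ x, g x ^ 2 ∂μ ≤ ∫ _x, M ^ 2 ∂μ :=
          integral_mono hg2i (integrable_const _) (fun x => (le_abs_self _).trans (hg2b x))
      _ = M ^ 2 * (μ Set.univ).toReal := by simp [mul_comm, measureReal_def]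
  have hsqg : Real.sqrt (∫ x, g x ^ 2 ∂μ) ≤ M * Real.sqrt (μ Set.univ).toReal := by
    have := Real.sqrt_le_sqrt hIg2
    rwa [Real.sqrt_mul (sq_nonneg M), Real.sqrt_sq hM0] at this
  set D : ℝ := Cs' / (4 * Real.pi) + |C₀| with hDdef
  have hD0 : 0 ≤ D := add_nonneg (div_nonneg hCs'0 (by positivity)) (abs_nonneg _)
  refine ⟨D * M / (4 * Real.pi), ?_⟩
  filter_upwards [hC₀, eventually_ge_atTop 1] with k hk hk1
  have hGg : (∫ x, (s x - S) ^ 2 ∂μ) = ∫ x, g x ^ 2 ∂μ := rfl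
  rw [hGg]
  have hk0 : (0 : ℝ) < (k : ℝ) := by exact_mod_cast hk1
  set c : ℝ := 1 / (4 * Real.pi * k) with hcdef
  have hc0 : 0 ≤ c := by positivity
  set f : Fin (N k + 1) → X → ℝ := fun i x => ‖v k i x‖ ^ 2 with hfdef
  have hf0 : ∀ i x, 0 ≤ f i x := fun i x => sq_nonneg _
  have hfm : ∀ i, Measurable (f i) := fun i => (hvm k i).norm.pow_const 2
  have hfi : ∀ i, Integrable (f i) μ := by
    intro i
    by_contra h
    have := hvL2 k i
    rw [integral_undef h] at this
    exact zero_ne_one this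
  have hfg : ∀ i, Integrable (fun x => f i x * g x) μ := by
    intro i
    exact ((hfi i).bdd_mul hgm.aestronglyMeasurable
      (ae_of_all _ fun x => by simpa [Real.norm_eq_abs] using hgb x)).congr
      (ae_of_all _ fun x => mul_comm _ _)
  have hfg2 : ∀ i, Integrable (fun x => f i x * g x ^ 2) μ := by
    intro i
    exact ((hfi i).bdd_mul (hgm.pow_const 2).aestronglyMeasurable
      (ae_of_all _ fun x => by simpa [Real.norm_eq_abs] using hg2b x)).congr
      (ae_of_all _ fun x => mul_comm _ _)
  have hcs : ∀ i, (∫ x, f i x * g x ∂μ) ^ 2 ≤ ∫ x, f i x * g x ^ 2 ∂μ := fun i =>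
    weighted_cs μ (f i) g (hf0 i) (hvL2 k i) (hfi i) (hfg i) (hfg2 i)
  have hsum : ∑ i, ∫ x, f i x * g x ^ 2 ∂μ = ∫ x, (∑ i, f i x) * g x ^ 2 ∂μ := by
    rw [← integral_finset_sum _ (fun i _ => hfg2 i)]
    simp [Finset.sum_mul]
  -- pointwise bound on B_k - 1
  have hBk : ∀ x, (∑ i, f i x) ≤ 1 + D / k := by
    intro x
    have h1 := hk x
    have h2 : |s x / (4 * Real.pi * k)| ≤ Cs' / (4 * Real.pi) / k := by
      rw [abs_div, abs_of_pos (show (0:ℝ) < 4 * Real.pi * k by positivity), div_div]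
      gcongr
      exact hCs' x
    have h3 : C₀ / (k : ℝ) ^ 2 ≤ |C₀| / k := by
      calc C₀ / (k : ℝ) ^ 2 ≤ |C₀| / (k : ℝ) ^ 2 := by gcongr; exact le_abs_self _
        _ ≤ |C₀| / k := by
            have hk1' : (1 : ℝ) ≤ (k : ℝ) := by exact_mod_cast hk1
            apply div_le_div_of_nonneg_left (abs_nonneg _) hk0
            nlinarith
    have habs : |(∑ i, f i x) - 1| ≤ D / k := by
      have : (∑ i, f i x) - 1 =
          ((∑ i, f i x) - 1 - s x / (4 * Real.pi * k)) + s x / (4 * Real.pi * k) := by ring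
      rw [this]
      calc |((∑ i, f i x) - 1 - s x / (4 * Real.pi * k)) + s x / (4 * Real.pi * k)|
          ≤ |(∑ i, f i x) - 1 - s x / (4 * Real.pi * k)| + |s x / (4 * Real.pi * k)| :=
            abs_add_le _ _
        _ ≤ C₀ / (k : ℝ) ^ 2 + Cs' / (4 * Real.pi) / k := add_le_add h1 h2
        _ ≤ |C₀| / k + Cs' / (4 * Real.pi) / k := by linarith [h3]
        _ = D / k := by rw [hDdef]; ring
    linarith [(abs_le.mp habs).2]
  have hBg2i : Integrable (fun x => (∑ i, f i x) * g x ^ 2) μ :=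
    (integrable_finset_sum Finset.univ (fun i _ => hfg2 i)).congr
      (ae_of_all _ fun x => (Finset.sum_mul ..).symm)
  have hmain : ∑ i, (∫ x, f i x * g x ∂μ) ^ 2 ≤ (1 + D / k) * ∫ x, g x ^ 2 ∂μ := by
    calc ∑ i, (∫ x, f i x * g x ∂μ) ^ 2 ≤ ∑ i, ∫ x, f i x * g x ^ 2 ∂μ :=
          Finset.sum_le_sum fun i _ => hcs i
      _ = ∫ x, (∑ i, f i x) * g x ^ 2 ∂μ := hsum
      _ ≤ ∫ x, (1 + D / k) * g x ^ 2 ∂μ :=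
          integral_mono hBg2i (hg2i.const_mul _)
            (fun x => mul_le_mul_of_nonneg_right (hBk x) (sq_nonneg _))
      _ = (1 + D / k) * ∫ x, g x ^ 2 ∂μ := integral_const_mul _ _
  -- now the square roots
  have hmsq : ∑ i, (m k i) ^ 2 = c ^ 2 * ∑ i, (∫ x, f i x * g x ∂μ) ^ 2 := by
    rw [Finset.mul_sum]
    refine Finset.sum_congr rfl fun i _ => ?_
    rw [hm k i]
    ring
  have h1Dk : (1 : ℝ) ≤ 1 + D / k := by
    have : 0 ≤ D / k := div_nonneg hD0 hk0.le
    linarith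
  have hstep : Real.sqrt (∑ i, (m k i) ^ 2) ≤ c * ((1 + D / k) * Real.sqrt (∫ x, g x ^ 2 ∂μ)) := by
    rw [hmsq, Real.sqrt_mul (sq_nonneg c), Real.sqrt_sq hc0]
    have h2 : Real.sqrt (∑ i, (∫ x, f i x * g x ∂μ) ^ 2) ≤
        (1 + D / k) * Real.sqrt (∫ x, g x ^ 2 ∂μ) := by
      have hle : ∑ i, (∫ x, f i x * g x ∂μ) ^ 2 ≤
          (1 + D / k) ^ 2 * ∫ x, g x ^ 2 ∂μ := by
        refine hmain.trans ?_
        have : (1 + D / k) ≤ (1 + D / k) ^ 2 := by nlinarith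
        exact mul_le_mul_of_nonneg_right this hg2nn
      have := Real.sqrt_le_sqrt hle
      rwa [Real.sqrt_mul (sq_nonneg _), Real.sqrt_sq (by linarith)] at this
    exact mul_le_mul_of_nonneg_left h2 hc0
  refine hstep.trans ?_
  have hexpand : c * ((1 + D / k) * Real.sqrt (∫ x, g x ^ 2 ∂μ)) =
      c * Real.sqrt (∫ x, g x ^ 2 ∂μ) + c * (D / k) * Real.sqrt (∫ x, g x ^ 2 ∂μ) := by ring
  rw [hexpand]
  have hlast : c * (D / k) * Real.sqrt (∫ x, g x ^ 2 ∂μ) ≤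
      D * M / (4 * Real.pi) / (k : ℝ) ^ 2 * Real.sqrt (μ Set.univ).toReal := by
    have h1 : c * (D / k) * Real.sqrt (∫ x, g x ^ 2 ∂μ) ≤
        c * (D / k) * (M * Real.sqrt (μ Set.univ).toReal) := by
      have : 0 ≤ c * (D / k) := mul_nonneg hc0 (div_nonneg hD0 hk0.le)
      exact mul_le_mul_of_nonneg_left hsqg this
    refine h1.trans_eq ?_
    rw [hcdef]
    field_simp
  exact add_le_add le_rfl hlast
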